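/- For every integer m ≥ 4, let G be the split graph with clique C of size m, independent set I of size 2^m − 1, where the vertices of I have pairwise distinct nonempty neighborhoods in C. Then the mim-width of G is at least m/(4·log_2 m). Consequently, for n = m + 2^m − 1, there is an n-vertex split graph of mim-width at least (log_2 n)/(5·log_2 log_2 n), so split graphs (and hence chordal graphs) have unbounded mim-width. -/

import Mathlib

open SimpleGraph
open scoped Classical

noncomputable section

/-- The graph `K_t ⊠ S_t`: a clique of size `t` (the `inl` part), an independent set of
size `t` (the `inr` part), joined by a perfect matching. -/
def ktst (t : ℕ) : SimpleGraph (Fin t ⊕ Fin t) :=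
  SimpleGraph.fromRel (fun x y =>
    match x, y with
    | Sum.inl i, Sum.inl j => i ≠ j
    | Sum.inl i, Sum.inr j => i = j
    | _, _ => False)

/-- The graph `K_t ⊠ K_t`: two cliques of size `t` joined by a perfect matching. -/
def ktkt (t : ℕ) : SimpleGraph (Fin t ⊕ Fin t) :=
  SimpleGraph.fromRel (fun x y =>
    match x, y with
    | Sum.inl i, Sum.inl j => i ≠ j
    | Sum.inr i, Sum.inr j => i ≠ j
    | Sum.inl i, Sum.inr j => i = j
    | _, _ => False)

/-- The cycle graph on `ZMod n`. -/
def cycleG (n : ℕ) : SimpleGraph (ZMod n) :=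
  SimpleGraph.fromRel (fun x y => y = x + 1)

/-- `σ` enumerates the vertices of `G` as a co-comparability ordering. -/
def IsCoCompOrdering {V : Type} {n : ℕ} (G : SimpleGraph V) (σ : Fin n ≃ V) : Prop :=
  ∀ i j k : Fin n, i < j → j < k → G.Adj (σ i) (σ k) →
    G.Adj (σ j) (σ i) ∨ G.Adj (σ j) (σ k)

/-- `G` contains `H` as an induced subgraph. -/
def ContainsInducedIso {V W : Type} (G : SimpleGraph V) (H : SimpleGraph W) : Prop :=
  ∃ f : W → V, Function.Injective f ∧ ∀ x y, H.Adj x y ↔ G.Adj (f x) (f y)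

/-- A graph is chordal iff it has no induced cycle of length at least 4. -/
def Chordal {V : Type} (G : SimpleGraph V) : Prop :=
  ∀ n, 4 ≤ n → ¬ ContainsInducedIso G (cycleG n)

/-- `G` contains `H` as an induced minor (via an induced minor model). -/
def HasInducedMinor {V W : Type} (G : SimpleGraph V) (H : SimpleGraph W) : Prop :=
  ∃ S : W → Set V,
    (∀ w, (G.induce (S w)).Connected) ∧
    (∀ w w', w ≠ w' → Disjoint (S w) (S w')) ∧
    (∀ w w', H.Adj w w' → ∃ a ∈ S w, ∃ b ∈ S w', G.Adj a b) ∧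
    (∀ w w', w ≠ w' → ¬ H.Adj w w' → ∀ a ∈ S w, ∀ b ∈ S w', ¬ G.Adj a b)

/-- `G` contains `K_t` as a minor (branch sets). -/
def HasCliqueMinor {V : Type} (G : SimpleGraph V) (t : ℕ) : Prop :=
  ∃ S : Fin t → Set V,
    (∀ i, (G.induce (S i)).Connected) ∧
    (∀ i j, i ≠ j → Disjoint (S i) (S j)) ∧
    (∀ i j, i ≠ j → ∃ a ∈ S i, ∃ b ∈ S j, G.Adj a b)

/-- There is an induced matching of `G` of size `m` between `A` and its complement:
the `2m` matched vertices induce exactly the `m` matching edges in `G`. -/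
def IsSimMatching {V : Type} (G : SimpleGraph V) (A : Set V) (m : ℕ) : Prop :=
  ∃ a b : Fin m → V,
    Function.Injective a ∧ Function.Injective b ∧
    (∀ i, a i ∈ A) ∧ (∀ i, b i ∉ A) ∧
    (∀ i j, G.Adj (a i) (b j) ↔ i = j) ∧
    (∀ i j, ¬ G.Adj (a i) (a j)) ∧
    (∀ i j, ¬ G.Adj (b i) (b j))

/-- There is an induced matching of size `m` in the bipartite graph `G[A, V \ A]`
of edges crossing the cut. -/
def IsMimMatching {V : Type} (G : SimpleGraph V) (A : Set V) (m : ℕ) : Prop :=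
  ∃ a b : Fin m → V,
    Function.Injective a ∧ Function.Injective b ∧
    (∀ i, a i ∈ A) ∧ (∀ i, b i ∉ A) ∧
    (∀ i j, G.Adj (a i) (b j) ↔ i = j)

def simval {V : Type} (G : SimpleGraph V) (A : Set V) : ℕ :=
  sSup {m | IsSimMatching G A m}

def mimval {V : Type} (G : SimpleGraph V) (A : Set V) : ℕ :=
  sSup {m | IsMimMatching G A m}

/-- GF(2)-rank of the `A × Aᶜ` submatrix of the adjacency matrix: the dimension of the
span of the rows of that submatrix (rows extended by zero on columns of `A`). -/
def cutrk {V : Type} [Fintype V] (G : SimpleGraph V) (A : Set V) : ℕ :=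
  Module.finrank (ZMod 2) (Submodule.span (ZMod 2)
    {r : V → ZMod 2 | ∃ a ∈ A, r = fun v => if v ∉ A ∧ G.Adj a v then 1 else 0})

/-- A branch-decomposition of a graph on vertex set `V`: a finite subcubic tree together
with an injection of `V` onto its leaves. -/
structure BranchDecomp (V : Type) [Fintype V] where
  β : Type
  finβ : Fintype β
  T : SimpleGraph β
  connected : T.Connected
  acyclic : T.IsAcyclic
  subcubic : ∀ x : β, (T.neighborSet x).ncard = 1 ∨ (T.neighborSet x).ncard = 3
  L : V → β
  inj : Function.Injective L
  leaves : ∀ x : β, (T.neighborSet x).ncard = 1 ↔ ∃ v, L v = x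

/-- The side of the cut induced by the tree edge `xy`, on the side of `x`. -/
def BranchDecomp.cut {V : Type} [Fintype V] (D : BranchDecomp V) (x y : D.β) : Set V :=
  {v | (D.T.deleteEdges {s(x, y)}).Reachable (D.L v) x}

/-- The `f`-width of a graph on vertex set `V`: minimum over branch-decompositions of the
maximum of `f` over the cuts of the decomposition. -/
def fWidth {V : Type} [Fintype V] (f : Set V → ℕ) : ℕ :=
  sInf {w | ∃ D : BranchDecomp V, ∀ x y, D.T.Adj x y → f (D.cut x y) ≤ w}

def simw {V : Type} [Fintype V] (G : SimpleGraph V) : ℕ := fWidth (simval G)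
def mimw {V : Type} [Fintype V] (G : SimpleGraph V) : ℕ := fWidth (mimval G)
def rankw {V : Type} [Fintype V] (G : SimpleGraph V) : ℕ := fWidth (cutrk G)

/-- Contraction of the edge `v₁v₂`: the vertex `v₂` is removed and `v₁` plays the role of
the contracted vertex `z`, adjacent to all former neighbors of `v₁` or `v₂`. -/
def contractE {V : Type} (G : SimpleGraph V) (v1 v2 : V) : SimpleGraph {v : V // v ≠ v2} :=
  SimpleGraph.fromRel (fun x y =>
    G.Adj x y ∨ ((x : V) = v1 ∧ G.Adj v2 y) ∨ ((y : V) = v1 ∧ G.Adj (x : V) v2))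

/-- The `(p × q)` column-clique grid. -/
def ccGrid (p q : ℕ) : SimpleGraph (Fin p × Fin q) :=
  SimpleGraph.fromRel (fun u v =>
    (u.2 = v.2) ∨ (u.1 = v.1 ∧ ((u.2 : ℕ) + 1 = v.2 ∨ (v.2 : ℕ) + 1 = u.2)))

/-- The `(p × q)` Hsu-clique chain graph. -/
def hsu (p q : ℕ) : SimpleGraph (Fin p × Fin q) :=
  SimpleGraph.fromRel (fun u v =>
    (u.2 = v.2) ∨ ((u.2 : ℕ) + 1 = v.2 ∧ u.1 ≤ v.1))

/-- The `(k × k)` grid graph. -/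
def gridG (k : ℕ) : SimpleGraph (Fin k × Fin k) :=
  SimpleGraph.fromRel (fun u v =>
    (u.1 = v.1 ∧ (u.2 : ℕ) + 1 = v.2) ∨ (u.2 = v.2 ∧ (u.1 : ℕ) + 1 = v.1))

/-- A tree-decomposition of `G`. -/
structure TreeDecomp (V : Type) (G : SimpleGraph V) where
  β : Type
  finβ : Fintype β
  T : SimpleGraph β
  connected : T.Connected
  acyclic : T.IsAcyclic
  B : β → Set V
  coverV : ∀ v : V, ∃ t, v ∈ B t
  coverE : ∀ u v, G.Adj u v → ∃ t, u ∈ B t ∧ v ∈ B t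
  coherent : ∀ v : V, (T.induce {t | v ∈ B t}).Connected

/-- Tree-width. -/
def tw {V : Type} (G : SimpleGraph V) : ℕ :=
  sInf {k | ∃ D : TreeDecomp V G, ∀ t, (D.B t).ncard ≤ k + 1}

/-- `G` is `d`-degenerate: every (induced) subgraph has a vertex of degree at most `d`. -/
def Degenerate {V : Type} (G : SimpleGraph V) (d : ℕ) : Prop :=
  ∀ S : Set V, S.Nonempty → ∃ v ∈ S, {u ∈ S | G.Adj v u}.ncard ≤ d

/-- Every graph on `N` vertices contains a clique of size `k` or an independent set of
size `l`. -/
def ramseyProp (N k l : ℕ) : Prop :=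
  ∀ G : SimpleGraph (Fin N),
    (∃ s : Finset (Fin N), G.IsNClique k s) ∨ (∃ s : Finset (Fin N), Gᶜ.IsNClique l s)

/-- The Ramsey number `R(k, l)`. -/
def ramsey (k l : ℕ) : ℕ := sInf {N | ramseyProp N k l}

/-- `G` is a circle graph: the intersection graph of chords of a circle, equivalently the
overlap graph of a family of intervals with pairwise distinct endpoints. -/
def IsCircleGraph {V : Type} (G : SimpleGraph V) : Prop :=
  ∃ a b : V → ℝ, (∀ v, a v < b v) ∧
    (∀ v w : V, v ≠ w → a v ≠ a w ∧ a v ≠ b w ∧ b v ≠ a w ∧ b v ≠ b w) ∧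
    (∀ v w, G.Adj v w ↔
      (a v < a w ∧ a w < b v ∧ b v < b w) ∨ (a w < a v ∧ a v < b w ∧ b w < b v))

/-- Vertex set of the split graph witnessing unbounded mim-width: a clique `Fin m`
together with one independent vertex for each nonempty subset of the clique. -/
abbrev splitV (m : ℕ) := Fin m ⊕ {S : Finset (Fin m) // S.Nonempty}

/-- The split graph with clique of size `m` and an independent set of size `2^m - 1`
whose vertices have pairwise distinct nonempty neighborhoods in the clique. -/
def splitG (m : ℕ) : SimpleGraph (splitV m) :=
  SimpleGraph.fromRel (fun x y =>
    match x, y with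
    | Sum.inl i, Sum.inl j => i ≠ j
    | Sum.inl i, Sum.inr S => i ∈ S.1
    | _, _ => False)

end

namespace MimAux
variable {β : Type} (T : SimpleGraph β)

/-- The side of vertex `x` after deleting edge `xy`. -/
def side (x y : β) : Set β := {z | (T.deleteEdges {s(x, y)}).Reachable z x}

lemma side_swap (x y : β) :
    side T y x = {z | (T.deleteEdges {s(x, y)}).Reachable z y} := by
  unfold side
  rw [Sym2.eq_swap]

lemma self_mem_side (x y : β) : x ∈ side T x y := Reachable.refl x

lemma bridge (ha : T.IsAcyclic) {x y : β} (h : T.Adj x y) :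
    ¬ (T.deleteEdges {s(x, y)}).Reachable x y := by
  have hb := (isAcyclic_iff_forall_adj_isBridge.mp ha) h
  exact isBridge_iff.mp hb

lemma cover_aux {x y z b : β} (p : T.Walk z b) :
    ((T.deleteEdges {s(x, y)}).Reachable b x ∨ (T.deleteEdges {s(x, y)}).Reachable b y) →
    ((T.deleteEdges {s(x, y)}).Reachable z x ∨ (T.deleteEdges {s(x, y)}).Reachable z y) := by
  induction p with
  | nil => exact id
  | @cons u v w h p ih =>
    intro hb
    by_cases he : s(u, v) = s(x, y)
    · rw [Sym2.eq_iff] at he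
      rcases he with ⟨rfl, rfl⟩ | ⟨rfl, rfl⟩
      · exact Or.inl (Reachable.refl _)
      · exact Or.inr (Reachable.refl _)
    · have hadj : (T.deleteEdges {s(x, y)}).Adj u v := by
        rw [deleteEdges_adj]
        exact ⟨h, by simpa using he⟩
      rcases ih hb with h1 | h1
      · exact Or.inl (hadj.reachable.trans h1)
      · exact Or.inr (hadj.reachable.trans h1)

lemma cover (hc : T.Connected) (x y : β) (z : β) :
    z ∈ side T x y ∨ z ∈ side T y x := by
  obtain ⟨p⟩ := hc.preconnected z x
  rw [side_swap T x y]
  exact cover_aux T p (Or.inl (Reachable.refl _))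

lemma side_disjoint (ha : T.IsAcyclic) {x y : β} (h : T.Adj x y) (z : β)
    (h1 : z ∈ side T x y) (h2 : z ∈ side T y x) : False := by
  rw [side_swap] at h2
  exact bridge T ha h (h1.symm.trans h2)

lemma mem_side_iff (hc : T.Connected) (ha : T.IsAcyclic) {x y : β} (h : T.Adj x y) (z : β) :
    z ∈ side T x y ↔ z ∉ side T y x := by
  constructor
  · intro h1 h2
    exact side_disjoint T ha h z h1 h2
  · intro h2
    rcases cover T hc x y z with h1 | h1
    · exact h1
    · exact absurd h1 h2

/-- A walk avoiding vertex `y` survives deleting any edge incident to `y`. -/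
lemma reachable_delete_of_avoid {a b c y : β} (p : T.Walk a b) (hy : y ∉ p.support) :
    (T.deleteEdges {s(c, y)}).Reachable a b := by
  refine ⟨p.toDeleteEdges _ ?_⟩
  intro e he
  simp only [Set.mem_singleton_iff]
  rintro rfl
  exact hy (p.snd_mem_support_of_mem_edges he)

lemma leaf_side_eq (ha : T.IsAcyclic) {x y : β} (h : T.Adj x y)
    (hleaf : T.neighborSet y = {x}) : side T y x = {y} := by
  apply Set.eq_of_subset_of_subset
  · intro z hz
    rw [side_swap] at hz
    rw [Sym2.eq_swap] at hz
    obtain ⟨p⟩ := hz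
    by_cases hzy : z = y
    · simp [hzy]
    · exfalso
      have hlen : p.length ≠ 0 := fun h0 => hzy (SimpleGraph.Walk.eq_of_length_eq_zero h0)
      have hne : p.darts ≠ [] := by
        intro h0
        apply hlen
        rw [← SimpleGraph.Walk.length_darts, h0]
        rfl
      set d := p.darts.getLast hne with hd
      have hsnd : d.snd = y := by rw [hd, SimpleGraph.Walk.getLast_darts_eq_lastDart]; rfl
      have hadj : (T.deleteEdges {s(y, x)}).Adj d.fst d.snd := d.adj
      rw [hsnd, deleteEdges_adj] at hadj
      have hmem : d.fst ∈ T.neighborSet y := hadj.1.symm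
      rw [hleaf] at hmem
      apply hadj.2
      simp only [Set.mem_singleton_iff] at hmem ⊢
      rw [hmem, Sym2.eq_swap]
  · intro z hz
    simp only [Set.mem_singleton_iff] at hz
    subst hz
    exact self_mem_side T z x

/-- transfer a walk in a subgraph (deleteEdges) back to `T`. -/
def transferUp {s : Set (Sym2 β)} {a b : β} (p : (T.deleteEdges s).Walk a b) : T.Walk a b :=
  p.transfer T (fun e he => edgeSet_mono (deleteEdges_le s) (p.edges_subset_edgeSet he))

lemma transferUp_support {s : Set (Sym2 β)} {a b : β} (p : (T.deleteEdges s).Walk a b) :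
    (transferUp T p).support = p.support := Walk.support_transfer _ _

lemma transferUp_edges {s : Set (Sym2 β)} {a b : β} (p : (T.deleteEdges s).Walk a b) :
    (transferUp T p).edges = p.edges := Walk.edges_transfer _ _

/-- A walk in `T - e` between the endpoints of `e` would give a cycle. -/
lemma no_walk_delete_self (ha : T.IsAcyclic) {z y : β} (h : T.Adj z y)
    (p : (T.deleteEdges {s(z, y)}).Walk y z) : False := by
  have hyz : y ≠ z := h.symm.ne
  set q := p.bypass with hq
  have hqp : q.IsPath := Walk.bypass_isPath p
  have hqT : (transferUp T q).IsPath := hqp.transfer _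
  have hedge : s(z, y) ∉ (transferUp T q).edges := by
    rw [transferUp_edges]
    intro hmem
    have := q.edges_subset_edgeSet hmem
    rw [edgeSet_deleteEdges] at this
    simp at this
  have hcyc := SimpleGraph.Path.cons_isCycle ⟨transferUp T q, hqT⟩ h hedge
  exact ha _ hcyc

/-- key subset lemma: the far side of an onward edge is inside the far side of the
current edge. -/
lemma side_subset (ha : T.IsAcyclic) {x y z : β} (h1 : T.Adj x y) (h2 : T.Adj y z)
    (hzx : z ≠ x) : side T z y ⊆ side T y x := by
  intro u hu
  obtain ⟨p⟩ := hu
  have hyp : y ∉ p.support := by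
    intro hy
    exact no_walk_delete_self T ha h2.symm (p.dropUntil y hy)
  rw [side_swap]
  have h3 : (T.deleteEdges {s(x, y)}).Reachable u z := by
    have := reachable_delete_of_avoid T (c := x) (transferUp T p)
      (by rwa [transferUp_support])
    exact this
  refine h3.trans (Adj.reachable ?_)
  rw [deleteEdges_adj]
  refine ⟨h2.symm, ?_⟩
  simp only [Set.mem_singleton_iff, Sym2.eq_iff]
  rintro (⟨rfl, -⟩ | ⟨rfl, rfl⟩)
  · exact hzx rfl
  · exact h2.ne rfl

/-- coverage: every vertex on the far side of `xy` is `y` or lies on the far side of an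
onward edge. -/
lemma side_cover (ha : T.IsAcyclic) {x y : β} (h1 : T.Adj x y) {u : β}
    (hu : u ∈ side T y x) :
    u = y ∨ ∃ z, T.Adj y z ∧ z ≠ x ∧ u ∈ side T z y := by
  rw [side_swap] at hu
  obtain ⟨p0⟩ := hu
  by_cases huy : u = y
  · exact Or.inl huy
  right
  set p := p0.bypass with hp
  have hpath : p.IsPath := Walk.bypass_isPath p0
  have hlen : p.length ≠ 0 := fun h0 => huy (SimpleGraph.Walk.eq_of_length_eq_zero h0)
  have hne : p.darts ≠ [] := by
    intro h0; apply hlen; rw [← SimpleGraph.Walk.length_darts, h0]; rfl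
  set d := p.darts.getLast hne with hd
  have hsnd : d.snd = y := by rw [hd, SimpleGraph.Walk.getLast_darts_eq_lastDart]; rfl
  have hadj : (T.deleteEdges {s(x, y)}).Adj d.fst d.snd := d.adj
  rw [hsnd] at hadj
  obtain ⟨w, hw⟩ : ∃ w, w = d.fst := ⟨d.fst, rfl⟩
  rw [← hw] at hadj
  have hadjT : T.Adj y w ∧ w ≠ x := by
    rw [deleteEdges_adj] at hadj
    refine ⟨hadj.1.symm, ?_⟩
    rintro rfl
    exact hadj.2 rfl
  refine ⟨w, hadjT.1, hadjT.2, ?_⟩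
  -- u reaches w avoiding vertex y
  have hwmem : w ∈ p.support := by
    rw [hw]
    exact Walk.dart_fst_mem_support_of_mem_darts _ (p.darts.getLast_mem hne)
  have hwy : w ≠ y := hadjT.1.ne'
  set q := p.takeUntil w hwmem with hq
  have hyq : y ∉ q.support := by
    intro hyq
    have hspec := p.take_spec hwmem
    have hnodup : p.support.Nodup := hpath.support_nodup
    rw [← hspec, Walk.support_append] at hnodup
    rw [List.nodup_append] at hnodup
    have hyd : y ∈ (p.dropUntil w hwmem).support.tail := by
      have hyend : y ∈ (p.dropUntil w hwmem).support := Walk.end_mem_support _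
      rw [Walk.support_eq_cons] at hyend
      rcases List.mem_cons.mp hyend with h' | h'
      · exact absurd h'.symm hwy
      · exact h'
    exact hnodup.2.2 y hyq y hyd rfl
  exact reachable_delete_of_avoid T (c := w) (transferUp T q) (by rwa [transferUp_support])

section Parent

/-- The graph on `Fin N` induced by a parent function `P : ℕ → ℕ`. -/
def parentGraph (N : ℕ) (P : ℕ → ℕ) : SimpleGraph (Fin N) :=
  SimpleGraph.fromRel (fun a b => P a.val = b.val)

lemma parentGraph_adj {N : ℕ} {P : ℕ → ℕ} {a b : Fin N} :
    (parentGraph N P).Adj a b ↔ a ≠ b ∧ (P a.val = b.val ∨ P b.val = a.val) := by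
  rfl

variable {N : ℕ} {P : ℕ → ℕ} (hP : ∀ a : Fin N, a.val ≠ 0 → P a.val < a.val)
  (hP0 : P 0 = 0)

include hP hP0 in
lemma parent_unique_smaller {a b : Fin N} (h : (parentGraph N P).Adj a b)
    (hba : b.val < a.val) : P a.val = b.val := by
  rw [parentGraph_adj] at h
  rcases h.2 with h' | h'
  · exact h'
  · exfalso
    by_cases hb0 : b.val = 0
    · rw [hb0, hP0] at h'
      omega
    · have := hP b hb0
      omega

include hP hP0 in
lemma parent_acyclic : (parentGraph N P).IsAcyclic := by
  intro v c hc
  classical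
  set s := c.support.toFinset with hs
  have hvs : v ∈ s := by simp [hs, Walk.start_mem_support]
  set m := s.max' ⟨v, hvs⟩ with hm
  have hmem : m ∈ c.support := List.mem_toFinset.mp (s.max'_mem ⟨v, hvs⟩)
  have hmax : ∀ u, u ∈ c.support → u ≤ m := by
    intro u hu
    exact s.le_max' u (by rwa [hs, List.mem_toFinset])
  set c' := c.rotate m hmem with hc'def
  have hc' : c'.IsCycle := hc.rotate hmem
  have hmax' : ∀ u, u ∈ c'.support → u ≤ m := by
    intro u hu
    by_cases hum : u = m
    · exact le_of_eq hum
    · apply hmax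
      have htail : u ∈ c'.support.tail := by
        rw [Walk.support_eq_cons] at hu
        rcases List.mem_cons.mp hu with h' | h'
        · exact absurd h' hum
        · exact h'
      have hrot := Walk.support_rotate c m hmem
      have := hrot.mem_iff.mp htail
      rw [Walk.support_eq_cons c]
      exact List.mem_cons_of_mem _ this
  have hl3 : 3 ≤ c'.length := hc'.three_le_length
  clear_value c'
  cases c' with
  | nil => simp at hl3
  | @cons _ b _ h q =>
    -- h : Adj m b, q : Walk b m
    have hbm : b ≠ m := (SimpleGraph.ne_of_adj _ h).symm
    have hble : b ≤ m := hmax' b (by simp [Walk.support_cons, Walk.start_mem_support])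
    have hblt : b.val < m.val := lt_of_le_of_ne (by exact_mod_cast hble) (fun h' => hbm (Fin.val_injective h'))
    have hm0 : m.val ≠ 0 := by omega
    have hPb : P m.val = b.val := parent_unique_smaller hP hP0 h hblt
    -- last dart
    have hql : q.length ≠ 0 := by
      have : q.length + 1 = (Walk.cons h q).length := by simp
      omega
    have hne : q.darts ≠ [] := by
      intro h0
      apply hql
      rw [← SimpleGraph.Walk.length_darts, h0]
      rfl
    set d := q.darts.getLast hne with hd
    have hsnd : d.snd = m := by rw [hd, SimpleGraph.Walk.getLast_darts_eq_lastDart]; rfl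
    have hwadj : (parentGraph N P).Adj d.fst m := hsnd ▸ d.adj
    have hwmem : d.fst ∈ q.support.dropLast := by
      rw [← Walk.map_fst_darts]
      exact List.mem_map_of_mem (q.darts.getLast_mem hne)
    have hqnodup : q.support.Nodup := by
      have := hc'.2
      simpa using this
    have hwm : d.fst ≠ m := by
      intro h'
      have hlast : q.support.dropLast ++ [m] = q.support := by
        have h1 := q.getLast_support
        have := List.dropLast_append_getLast (l := q.support) (by simp)
        rw [h1] at this
        exact this
      rw [← hlast, List.nodup_append] at hqnodup
      exact hqnodup.2.2 _ (h' ▸ hwmem) _ (by simp) rfl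
    have hwle : d.fst ≤ m := by
      apply hmax'
      rw [Walk.support_cons]
      apply List.mem_cons_of_mem
      exact List.mem_of_mem_dropLast hwmem
    have hwlt : d.fst.val < m.val :=
      lt_of_le_of_ne (by exact_mod_cast hwle) (fun h' => hwm (Fin.val_injective h'))
    have hPw : P m.val = d.fst.val := parent_unique_smaller hP hP0 hwadj.symm hwlt
    have hbw : b = d.fst := Fin.val_injective (by omega)
    -- edge nodup contradiction
    have hedges : (Walk.cons h q).edges = s(m, b) :: q.edges := rfl
    have htrail := hc'.isTrail
    rw [Walk.isTrail_def, hedges] at htrail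
    have hnotmem := (List.nodup_cons.mp htrail).1
    apply hnotmem
    have : d.edge ∈ q.edges := List.mem_map_of_mem (q.darts.getLast_mem hne)
    have hde : d.edge = s(m, b) := by
      rw [Sym2.eq_swap]
      rw [SimpleGraph.Dart.edge]
      rw [hbw]
      congr 1
    rwa [hde] at this

include hP in
omit hP0 in
lemma parent_connected (hN : 0 < N) : (parentGraph N P).Connected := by
  have : Nonempty (Fin N) := ⟨⟨0, hN⟩⟩
  rw [SimpleGraph.connected_iff]
  refine ⟨?_, this⟩
  have key : ∀ k (a : Fin N), a.val ≤ k → (parentGraph N P).Reachable a ⟨0, hN⟩ := by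
    intro k
    induction k with
    | zero =>
      intro a ha
      have : a = ⟨0, hN⟩ := by
        apply Fin.val_injective
        simpa using ha
      rw [this]
    | succ k ih =>
      intro a ha
      by_cases ha0 : a.val = 0
      · have : a = ⟨0, hN⟩ := Fin.val_injective (by simpa using ha0)
        rw [this]
      · have hlt := hP a ha0
        have hPa : P a.val < N := lt_trans hlt a.isLt
        have hadj : (parentGraph N P).Adj a ⟨P a.val, hPa⟩ := by
          rw [parentGraph_adj]
          constructor
          · intro h'
            rw [Fin.ext_iff] at h'
            simp at h'
            omega
          · left; rfl
        exact hadj.reachable.trans (ih ⟨P a.val, hPa⟩ (by simp; omega))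
  intro a b
  exact (key N a (le_of_lt a.isLt)).trans (key N b (le_of_lt b.isLt)).symm

end Parent
section Caterpillar

/-- parent function of the caterpillar tree with `n` leaves. -/
def catP (n : ℕ) : ℕ → ℕ := fun j => if j < n - 2 then j - 1 else min (j - (n - 1)) (n - 3)

/-- the caterpillar tree with `n` leaves, on `2n - 2` vertices. -/
def catT (n : ℕ) : SimpleGraph (Fin (2 * n - 2)) := parentGraph _ (catP n)

variable {n : ℕ} (hn : 6 ≤ n)

include hn in
lemma catP_le (j : ℕ) : catP n j ≤ n - 3 := by
  unfold catP; split_ifs <;> omega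

include hn in
lemma catP_lt (a : Fin (2 * n - 2)) (ha : a.val ≠ 0) : catP n a.val < a.val := by
  have := catP_le hn a.val
  unfold catP at this ⊢
  split_ifs at this ⊢ <;> omega

omit hn in
lemma catP_zero : catP n 0 = 0 := by
  unfold catP
  split_ifs with h <;> omega

lemma cat_adj {x y : Fin (2 * n - 2)} :
    (catT n).Adj x y ↔ x.val ≠ y.val ∧ (catP n x.val = y.val ∨ catP n y.val = x.val) := by
  rw [catT, parentGraph_adj, Ne, Fin.ext_iff]

include hn in
lemma cat_deg (x : Fin (2 * n - 2)) :
    ((catT n).neighborSet x).ncard = if n - 2 ≤ x.val then 1 else 3 := by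
  have hxlt := x.isLt
  split_ifs with hx
  · -- leaf
    have hset : (catT n).neighborSet x = {⟨catP n x.val, by have := catP_le hn x.val; omega⟩} := by
      ext y
      have hylt := y.isLt
      simp only [mem_neighborSet, Set.mem_singleton_iff, cat_adj, Fin.ext_iff]
      have h1 := catP_le hn x.val
      have h2 := catP_le hn y.val
      constructor
      · rintro ⟨hne, h | h⟩
        · omega
        · omega
      · intro h
        refine ⟨by omega, Or.inl (by omega)⟩
    rw [hset, Set.ncard_singleton]
  · -- internal
    rcases (by omega : x.val = 0 ∨ (0 < x.val ∧ x.val < n - 3) ∨ x.val = n - 3) with hx0 | hmid | hlast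
    · have hset : (catT n).neighborSet x =
          {⟨1, by omega⟩, ⟨n - 2, by omega⟩, ⟨n - 1, by omega⟩} := by
        ext y
        have hylt := y.isLt
        simp only [mem_neighborSet, Set.mem_insert_iff, Set.mem_singleton_iff, cat_adj,
          Fin.ext_iff]
        have h2 := catP_le hn y.val
        constructor
        · rintro ⟨hne, h | h⟩
          · unfold catP at h
            split_ifs at h <;> omega
          · unfold catP at h
            split_ifs at h <;> omega
        · intro h
          refine ⟨by omega, Or.inr ?_⟩
          unfold catP
          split_ifs <;> omega
      rw [hset]
      rw [Set.ncard_eq_three]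
      exact ⟨_, _, _, by simp only [Ne, Fin.mk.injEq]; omega, by simp only [Ne, Fin.mk.injEq]; omega,
        by simp only [Ne, Fin.mk.injEq]; omega, rfl⟩
    · have hset : (catT n).neighborSet x =
          {⟨x.val - 1, by omega⟩, ⟨x.val + 1, by omega⟩, ⟨x.val + n - 1, by omega⟩} := by
        ext y
        have hylt := y.isLt
        simp only [mem_neighborSet, Set.mem_insert_iff, Set.mem_singleton_iff, cat_adj,
          Fin.ext_iff]
        constructor
        · rintro ⟨hne, h | h⟩
          · unfold catP at h
            split_ifs at h <;> omega
          · unfold catP at h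
            split_ifs at h <;> omega
        · intro h
          rcases h with h | h | h
          · refine ⟨by omega, Or.inl ?_⟩
            unfold catP
            split_ifs <;> omega
          · refine ⟨by omega, Or.inr ?_⟩
            unfold catP
            split_ifs <;> omega
          · refine ⟨by omega, Or.inr ?_⟩
            unfold catP
            split_ifs <;> omega
      rw [hset]
      rw [Set.ncard_eq_three]
      exact ⟨_, _, _, by simp only [Ne, Fin.mk.injEq]; omega, by simp only [Ne, Fin.mk.injEq]; omega,
        by simp only [Ne, Fin.mk.injEq]; omega, rfl⟩
    · have hset : (catT n).neighborSet x =
          {⟨n - 4, by omega⟩, ⟨2 * n - 4, by omega⟩, ⟨2 * n - 3, by omega⟩} := by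
        ext y
        have hylt := y.isLt
        simp only [mem_neighborSet, Set.mem_insert_iff, Set.mem_singleton_iff, cat_adj,
          Fin.ext_iff]
        constructor
        · rintro ⟨hne, h | h⟩
          · unfold catP at h
            split_ifs at h <;> omega
          · unfold catP at h
            split_ifs at h <;> omega
        · intro h
          rcases h with h | h | h
          · refine ⟨by omega, Or.inl ?_⟩
            unfold catP
            split_ifs <;> omega
          · refine ⟨by omega, Or.inr ?_⟩
            unfold catP
            split_ifs <;> omega
          · refine ⟨by omega, Or.inr ?_⟩
            unfold catP
            split_ifs <;> omega
      rw [hset]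
      rw [Set.ncard_eq_three]
      exact ⟨_, _, _, by simp only [Ne, Fin.mk.injEq]; omega, by simp only [Ne, Fin.mk.injEq]; omega,
        by simp only [Ne, Fin.mk.injEq]; omega, rfl⟩

end Caterpillar

section Balanced

variable {β : Type} (T : SimpleGraph β) [Fintype β] (μ : β → ℕ)

/-- weight of a set of tree vertices. -/
noncomputable def wS (S : Set β) : ℕ := ∑ z ∈ Finset.univ.filter (· ∈ S), μ z

lemma wS_mono {S S' : Set β} (h : S ⊆ S') : wS μ S ≤ wS μ S' :=
  Finset.sum_le_sum_of_subset (Finset.monotone_filter_right _ (fun z _ hz => h hz))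

lemma wS_partition (hc : T.Connected) (ha : T.IsAcyclic) {x y : β} (h : T.Adj x y) :
    wS μ (side T x y) + wS μ (side T y x) = ∑ z, μ z := by
  have := Finset.sum_filter_add_sum_filter_not Finset.univ (· ∈ side T x y) μ
  rw [← this]
  congr 1
  apply Finset.sum_congr _ (fun _ _ => rfl)
  apply Finset.filter_congr
  intro z _
  constructor
  · intro h2 h1
    exact side_disjoint T ha h z h1 h2
  · intro h1
    rcases cover T hc x y z with h2 | h2
    · exact absurd h2 h1
    · exact h2

lemma exists_balanced (hc : T.Connected) (ha : T.IsAcyclic)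
    (hdeg : ∀ z : β, (T.neighborSet z).ncard = 1 ∨ (T.neighborSet z).ncard = 3)
    (hμ1 : ∀ z, μ z ≤ 1)
    (hμ3 : ∀ z, (T.neighborSet z).ncard = 3 → μ z = 0)
    (hW : 2 ≤ ∑ z, μ z)
    (hnt : ∃ a b : β, a ≠ b) :
    ∃ x y, T.Adj x y ∧ (∑ z, μ z) ≤ 3 * wS μ (side T x y) ∧
      (∑ z, μ z) ≤ 3 * wS μ (side T y x) := by
  set W := ∑ z, μ z with hWdef
  by_contra hno
  push_neg at hno
  have hun : ∀ x y, T.Adj x y → 3 * wS μ (side T x y) < W ∨ 3 * wS μ (side T y x) < W := by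
    intro x y hxy
    by_cases hle : W ≤ 3 * wS μ (side T x y)
    · exact Or.inr (hno x y hxy hle)
    · exact Or.inl (not_le.mp hle)
  have hheavy : ∀ x y, T.Adj x y → 2 * W < 3 * wS μ (side T y x) ∨
      2 * W < 3 * wS μ (side T x y) := by
    intro x y hxy
    have hpart := wS_partition T μ hc ha hxy
    rcases hun x y hxy with h' | h' <;> omega
  -- an edge exists
  obtain ⟨a, b, hab⟩ := hnt
  obtain ⟨p⟩ := hc.preconnected a b
  have hedge : ∃ x y, T.Adj x y := by
    cases p with
    | nil => exact absurd rfl hab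
    | cons h _ => exact ⟨_, _, h⟩
  obtain ⟨x0, y0, hxy0⟩ := hedge
  -- the set of far-side sizes of heavy directed edges
  set Sset : Set ℕ := {n | ∃ x y, T.Adj x y ∧ 2 * W < 3 * wS μ (side T y x) ∧
    (Finset.univ.filter (· ∈ side T y x)).card = n} with hSset
  have hSne : Sset.Nonempty := by
    rcases hheavy x0 y0 hxy0 with h' | h'
    · exact ⟨_, x0, y0, hxy0, h', rfl⟩
    · exact ⟨_, y0, x0, hxy0.symm, h', rfl⟩
  obtain ⟨x, y, hadj, hhy, hcard⟩ := Nat.sInf_mem hSne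
  -- y cannot be a leaf
  have hdeg3 : (T.neighborSet y).ncard = 3 := by
    rcases hdeg y with h1 | h1
    · exfalso
      obtain ⟨a', ha'⟩ := Set.ncard_eq_one.mp h1
      have hxa : x ∈ T.neighborSet y := hadj.symm
      rw [ha'] at hxa
      have : T.neighborSet y = {x} := by rw [ha', Set.mem_singleton_iff.mp hxa]
      have hside := leaf_side_eq T ha hadj this
      have : wS μ (side T y x) ≤ 1 := by
        rw [hside]
        have : Finset.univ.filter (· ∈ ({y} : Set β)) = {y} := by
          ext z; simp
        rw [wS]
        simpa [Finset.sum_filter] using hμ1 y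
      omega
    · exact h1
  have hμy : μ y = 0 := hμ3 y hdeg3
  -- extract the two other neighbors
  obtain ⟨n1, n2, n3, h12, h13, h23, hN⟩ := Set.ncard_eq_three.mp hdeg3
  have hxN : x ∈ T.neighborSet y := hadj.symm
  have hsplit : ∃ z1 z2 : β, z1 ≠ x ∧ z2 ≠ x ∧ T.Adj y z1 ∧ T.Adj y z2 ∧
      ∀ u ∈ T.neighborSet y, u = x ∨ u = z1 ∨ u = z2 := by
    rw [hN] at hxN
    simp only [Set.mem_insert_iff, Set.mem_singleton_iff] at hxN
    have hmem : ∀ u, u ∈ T.neighborSet y ↔ (u = n1 ∨ u = n2 ∨ u = n3) := by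
      intro u; rw [hN]; simp
    rcases hxN with rfl | rfl | rfl
    · exact ⟨n2, n3, Ne.symm h12, Ne.symm h13, (hmem n2).mpr (by tauto),
        (hmem n3).mpr (by tauto), fun u hu => by rw [hmem] at hu; tauto⟩
    · exact ⟨n1, n3, h12, Ne.symm h23, (hmem n1).mpr (by tauto),
        (hmem n3).mpr (by tauto), fun u hu => by rw [hmem] at hu; tauto⟩
    · exact ⟨n1, n2, h13, h23, (hmem n1).mpr (by tauto),
        (hmem n2).mpr (by tauto), fun u hu => by rw [hmem] at hu; tauto⟩
  obtain ⟨z1, z2, hz1x, hz2x, hyz1, hyz2, hcases⟩ := hsplit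
  -- coverage bound
  have hcov : wS μ (side T y x) ≤ μ y + wS μ (side T z1 y) + wS μ (side T z2 y) := by
    have hsub : Finset.univ.filter (· ∈ side T y x) ⊆
        insert y ((Finset.univ.filter (· ∈ side T z1 y)) ∪
          (Finset.univ.filter (· ∈ side T z2 y))) := by
      intro u hu
      simp only [Finset.mem_filter, Finset.mem_univ, true_and] at hu
      rcases side_cover T ha hadj hu with rfl | ⟨z, hyz, hzx, huz⟩
      · exact Finset.mem_insert_self _ _
      · rcases hcases z hyz with rfl | rfl | rfl
        · exact absurd rfl hzx
        · exact Finset.mem_insert_of_mem (Finset.mem_union_left _ (by simp [huz]))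
        · exact Finset.mem_insert_of_mem (Finset.mem_union_right _ (by simp [huz]))
    calc wS μ (side T y x) ≤ ∑ z ∈ insert y ((Finset.univ.filter (· ∈ side T z1 y)) ∪
          (Finset.univ.filter (· ∈ side T z2 y))), μ z :=
        Finset.sum_le_sum_of_subset hsub
      _ ≤ μ y + ∑ z ∈ (Finset.univ.filter (· ∈ side T z1 y)) ∪
          (Finset.univ.filter (· ∈ side T z2 y)), μ z := by
        by_cases hy : y ∈ (Finset.univ.filter (· ∈ side T z1 y)) ∪
            (Finset.univ.filter (· ∈ side T z2 y))
        · rw [Finset.insert_eq_self.mpr hy]; omega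
        · rw [Finset.sum_insert hy]
      _ ≤ μ y + (wS μ (side T z1 y) + wS μ (side T z2 y)) := by
        have := Finset.sum_union_inter (s₁ := Finset.univ.filter (· ∈ side T z1 y))
          (s₂ := Finset.univ.filter (· ∈ side T z2 y)) (f := μ)
        unfold wS
        omega
      _ = _ := by omega
  -- one onward edge is heavy
  have honward : ∃ z, T.Adj y z ∧ z ≠ x ∧ W < 3 * wS μ (side T z y) := by
    rcases (by omega : W < 3 * wS μ (side T z1 y) ∨ W < 3 * wS μ (side T z2 y)) with h' | h'
    · exact ⟨z1, hyz1, hz1x, h'⟩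
    · exact ⟨z2, hyz2, hz2x, h'⟩
  obtain ⟨z, hyz, hzx, hWz⟩ := honward
  have hheavy2 : 2 * W < 3 * wS μ (side T z y) := by
    have hpart := wS_partition T μ hc ha hyz
    rcases hun y z hyz with h' | h' <;> omega
  -- strict decrease of far side
  have hssub : Finset.univ.filter (· ∈ side T z y) ⊂ Finset.univ.filter (· ∈ side T y x) := by
    constructor
    · apply Finset.monotone_filter_right
      intro u _ hu
      exact side_subset T ha hadj hyz hzx hu
    · intro hsub'
      have hy1 : y ∈ Finset.univ.filter (· ∈ side T y x) := by
        simp [self_mem_side]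
      have hy2 := hsub' hy1
      simp only [Finset.mem_filter, Finset.mem_univ, true_and] at hy2
      exact side_disjoint T ha hyz y (self_mem_side T y z) hy2
  have hlt : (Finset.univ.filter (· ∈ side T z y)).card < sInf Sset := by
    rw [← hcard]
    exact Finset.card_lt_card hssub
  have hge : sInf Sset ≤ (Finset.univ.filter (· ∈ side T z y)).card :=
    Nat.sInf_le ⟨y, z, hyz, hheavy2, rfl⟩
  omega

end Balanced
section Numeric

lemma claim53 : ∀ k, 5 ≤ k → 3 * (1 + k) + 2 ≤ 2 ^ k := by
  intro k hk
  induction k, hk using Nat.le_induction with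
  | base => norm_num
  | succ k hk ih =>
    have h2 : (3:ℕ) ≤ 2 ^ k := le_trans (by norm_num) (le_trans (by norm_num : (32:ℕ) ≤ 32) (by
      calc (32:ℕ) = 2 ^ 5 := by norm_num
        _ ≤ 2 ^ k := Nat.pow_le_pow_right (by norm_num) hk))
    have : 2 ^ (k + 1) = 2 ^ k + 2 ^ k := by ring
    omega

lemma geom_le {m : ℕ} (hm : 2 ≤ m) : ∀ t, 1 ≤ t →
    (∑ i ∈ Finset.range t, m ^ i) ≤ 2 * m ^ (t - 1) := by
  intro t ht
  induction t, ht using Nat.le_induction with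
  | base => simp
  | succ t ht ih =>
    rw [Finset.sum_range_succ]
    have h1 : 2 * m ^ (t - 1) ≤ m ^ t := by
      calc 2 * m ^ (t - 1) ≤ m * m ^ (t - 1) := Nat.mul_le_mul_right _ hm
        _ = m ^ (t - 1 + 1) := by ring
        _ = m ^ t := by congr 1; omega
    have : m ^ t + m ^ t = 2 * m ^ t := by ring
    simpa using by omega
lemma rpow_nat_eq (c : ℕ) : (2:ℝ) ^ ((c:ℕ):ℝ) = ((2 ^ c : ℕ) : ℝ) := by
  rw [Real.rpow_natCast]
  push_cast
  ring

lemma logb_ge_two {m : ℕ} (hm : 4 ≤ m) : 2 ≤ Real.logb 2 m := by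
  have hmpos : (0:ℝ) < m := by exact_mod_cast (by omega : 0 < m)
  rw [Real.le_logb_iff_rpow_le one_lt_two hmpos]
  calc (2:ℝ) ^ (2:ℝ) = (2:ℝ) ^ ((2:ℕ):ℝ) := by norm_num
    _ = ((2 ^ 2 : ℕ):ℝ) := rpow_nat_eq 2
    _ ≤ (m:ℝ) := by exact_mod_cast hm

lemma logb_pos' {m : ℕ} (hm : 4 ≤ m) : 0 < Real.logb 2 m :=
  lt_of_lt_of_le (by norm_num) (logb_ge_two hm)

/-- the target mim-width value. -/
noncomputable def tval (m : ℕ) : ℕ := ⌈(m:ℝ) / (4 * Real.logb 2 m)⌉₊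

lemma tval_pos {m : ℕ} (hm : 4 ≤ m) : 1 ≤ tval m := by
  rw [tval, Nat.one_le_ceil_iff]
  have hm0 : (0:ℝ) < m := by exact_mod_cast (by omega : 0 < m)
  exact div_pos hm0 (by have := logb_pos' hm; linarith)

lemma tval_sub_one_lt {m : ℕ} (hm : 4 ≤ m) :
    ((tval m : ℝ) - 1) < (m:ℝ) / (4 * Real.logb 2 m) := by
  have hm0 : (0:ℝ) < m := by exact_mod_cast (by omega : 0 < m)
  have h0 : (0:ℝ) ≤ (m:ℝ) / (4 * Real.logb 2 m) :=
    le_of_lt (div_pos hm0 (by have := logb_pos' hm; linarith))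
  have := Nat.ceil_lt_add_one h0
  rw [tval]
  linarith

/-- KEY numeric inequality. -/
lemma key_numeric {m k : ℕ} (hm : 4 ≤ m) (hk1 : m ≤ 2 * k) (hk2 : k ≤ m) :
    3 * 2 ^ (m - k) * (∑ i ∈ Finset.range (tval m), Nat.choose k i) < 2 ^ m - 1 := by
  have hL2 : 2 ≤ Real.logb 2 m := logb_ge_two hm
  have hLpos : 0 < Real.logb 2 m := logb_pos' hm
  by_cases ht1 : tval m = 1
  · -- t = 1
    rw [ht1]
    simp only [Finset.range_one, Finset.sum_singleton, Nat.choose_zero_right, mul_one]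
    have hk2' : 2 ≤ k := by omega
    have h1 : 2 ^ (m - k) ≤ 2 ^ (m - 2) := Nat.pow_le_pow_right (by norm_num) (by omega)
    have h2 : 2 ^ m = 2 ^ (m - 2) * 4 := by
      rw [show (4:ℕ) = 2^2 by norm_num, ← pow_add]
      congr 1
      omega
    have h3 : 4 ≤ 2 ^ (m - 2) := by
      calc (4:ℕ) = 2 ^ 2 := by norm_num
        _ ≤ 2 ^ (m - 2) := Nat.pow_le_pow_right (by norm_num) (by omega)
    omega
  · have ht2 : 2 ≤ tval m := by have := tval_pos hm; omega
    -- bound t ≤ ceil(m/8) style facts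
    have htm8 : (tval m : ℝ) - 1 < (m:ℝ) / 8 := by
      have h := tval_sub_one_lt hm
      have : (m:ℝ) / (4 * Real.logb 2 m) ≤ (m:ℝ) / 8 := by
        apply div_le_div_of_nonneg_left (by positivity) (by norm_num)
        linarith
      linarith
    by_cases hm16 : m ≤ 16
    · -- then t = 2 and m ≥ 9
      have htle : tval m ≤ 2 := by
        by_contra h'
        push_neg at h'
        have : (3:ℝ) ≤ (tval m : ℝ) := by exact_mod_cast h'
        have : (16:ℝ) < m := by
          have := htm8
          nlinarith
        have : (16:ℕ) < m := by exact_mod_cast this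
        omega
      have ht2' : tval m = 2 := by omega
      have hm9 : 9 ≤ m := by
        by_contra h'
        push_neg at h'
        have : (m:ℝ) ≤ 8 := by exact_mod_cast (by omega : m ≤ 8)
        have h2' : (tval m : ℝ) - 1 < 1 := by
          have := htm8
          linarith
        have : (tval m : ℝ) < 2 := by linarith
        have : tval m < 2 := by exact_mod_cast this
        omega
      rw [ht2']
      have hsum : (∑ i ∈ Finset.range 2, Nat.choose k i) = 1 + k := by
        simp [Finset.sum_range_succ]
      rw [hsum]
      have hk5 : 5 ≤ k := by omega
      have hc := claim53 k hk5
      -- 3*(1+k) ≤ 2^k - 2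
      have h1 : 3 * 2 ^ (m - k) * (1 + k) = 3 * (1 + k) * 2 ^ (m - k) := by ring
      rw [h1]
      have h2 : 3 * (1 + k) * 2 ^ (m - k) ≤ (2 ^ k - 2) * 2 ^ (m - k) :=
        Nat.mul_le_mul_right _ (by omega)
      have h3 : (2 ^ k - 2) * 2 ^ (m - k) = 2 ^ m - 2 * 2 ^ (m - k) := by
        have h4 : 2 ^ k * 2 ^ (m - k) = 2 ^ m := by
          rw [← pow_add]; congr 1; omega
        have h5 : 2 ≤ 2 ^ k := by
          calc (2:ℕ) = 2^1 := by norm_num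
            _ ≤ 2 ^ k := Nat.pow_le_pow_right (by norm_num) (by omega)
        rw [Nat.sub_mul, h4]
      have h6 : 1 ≤ 2 ^ (m - k) := Nat.one_le_two_pow
      have h7 : 2 * 2 ^ (m - k) ≥ 2 := by omega
      have h8 : 2 ^ m ≥ 2 ^ k := Nat.pow_le_pow_right (by norm_num) hk2
      have h9 : (32:ℕ) ≤ 2 ^ k := by
        calc (32:ℕ) = 2^5 := by norm_num
          _ ≤ 2 ^ k := Nat.pow_le_pow_right (by norm_num) hk5
      omega
    · -- m ≥ 17
      push_neg at hm16
      set t := tval m with htdef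
      set q := m / 4 with hqdef
      -- m^(t-1) < 2^(q+1)
      have hstep : (m:ℕ) ^ (t - 1) < 2 ^ (q + 1) := by
        have hlt : ((t:ℝ) - 1) * Real.logb 2 m < (m:ℝ) / 4 := by
          have h := tval_sub_one_lt hm
          calc ((t:ℝ) - 1) * Real.logb 2 m
              < ((m:ℝ) / (4 * Real.logb 2 m)) * Real.logb 2 m := by
                apply mul_lt_mul_of_pos_right h hLpos
            _ = (m:ℝ) / 4 := by field_simp
        have hq4 : (m:ℝ) / 4 < (q:ℝ) + 1 := by
          have hnat : m < 4 * (m / 4) + 4 := by omega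
          have : (m:ℝ) < 4 * (q:ℝ) + 4 := by exact_mod_cast hnat
          linarith
        have hmpos : (0:ℝ) < m := by exact_mod_cast (by omega : 0 < m)
        have hcast : (((t - 1 : ℕ)):ℝ) = (t:ℝ) - 1 := by
          have := tval_pos hm
          push_cast [Nat.cast_sub (by omega : 1 ≤ t)]
          ring
        have hlogp : Real.logb 2 ((m:ℝ) ^ (t - 1)) < ((q + 1 : ℕ):ℝ) := by
          rw [Real.logb_pow, hcast]
          push_cast
          linarith
        have hxpos : (0:ℝ) < (m:ℝ) ^ (t - 1) := pow_pos hmpos _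
        have h := (Real.logb_lt_iff_lt_rpow one_lt_two hxpos).mp hlogp
        rw [rpow_nat_eq (q+1)] at h
        exact_mod_cast h
      -- now the chain
      have hsum1 : (∑ i ∈ Finset.range t, Nat.choose k i) ≤ ∑ i ∈ Finset.range t, m ^ i := by
        apply Finset.sum_le_sum
        intro i _
        exact le_trans (Nat.choose_le_pow k i) (Nat.pow_le_pow_left hk2 i)
      have hsum2 : (∑ i ∈ Finset.range t, m ^ i) ≤ 2 * m ^ (t - 1) :=
        geom_le (by omega) t (by omega)
      have hchain : 3 * 2 ^ (m - k) * (∑ i ∈ Finset.range t, Nat.choose k i)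
          ≤ 6 * (2 ^ (m - k) * 2 ^ (q + 1)) := by
        calc 3 * 2 ^ (m - k) * (∑ i ∈ Finset.range t, Nat.choose k i)
            ≤ 3 * 2 ^ (m - k) * (2 * m ^ (t - 1)) :=
              Nat.mul_le_mul_left _ (le_trans hsum1 hsum2)
          _ = 6 * (2 ^ (m - k) * m ^ (t - 1)) := by ring
          _ ≤ 6 * (2 ^ (m - k) * 2 ^ (q + 1)) := by
              apply Nat.mul_le_mul_left
              exact Nat.mul_le_mul_left _ (le_of_lt hstep)
      have hexp : 2 ^ (m - k) * 2 ^ (q + 1) ≤ 2 ^ (m - 4) := by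
        rw [← pow_add]
        apply Nat.pow_le_pow_right (by norm_num)
        omega
      have hfin : 6 * 2 ^ (m - 4) < 2 ^ m - 1 := by
        have h1 : 2 ^ m = 2 ^ (m - 4) * 16 := by
          rw [show (16:ℕ) = 2^4 by norm_num, ← pow_add]
          congr 1
          omega
        have h2 : 1 ≤ 2 ^ (m - 4) := Nat.one_le_two_pow
        omega
      calc 3 * 2 ^ (m - k) * (∑ i ∈ Finset.range t, Nat.choose k i)
          ≤ 6 * (2 ^ (m - k) * 2 ^ (q + 1)) := hchain
        _ ≤ 6 * 2 ^ (m - 4) := Nat.mul_le_mul_left _ hexp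
        _ < 2 ^ m - 1 := hfin

end Numeric

lemma split_adj {m : ℕ} (S : {S : Finset (Fin m) // S.Nonempty}) (i : Fin m) :
    (splitG m).Adj (Sum.inr S) (Sum.inl i) ↔ i ∈ S.1 := by
  simp only [splitG, SimpleGraph.fromRel_adj]
  constructor
  · rintro ⟨-, h | h⟩
    · exact h.elim
    · exact h
  · intro h
    exact ⟨by simp, Or.inr h⟩

lemma card_I (m : ℕ) : Fintype.card {S : Finset (Fin m) // S.Nonempty} = 2 ^ m - 1 := by
  rw [Fintype.card_subtype]
  have h1 : Finset.univ.filter (fun S : Finset (Fin m) => S.Nonempty) =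
      Finset.univ.erase ∅ := by
    ext S
    simp [Finset.nonempty_iff_ne_empty]
  rw [h1, Finset.card_erase_of_mem (Finset.mem_univ _)]
  simp [Finset.card_univ]

lemma isMimMatching_zero {V : Type} [Fintype V] (G : SimpleGraph V) (A : Set V) :
    IsMimMatching G A 0 :=
  ⟨Fin.elim0, Fin.elim0, fun i => i.elim0, fun i => i.elim0, fun i => i.elim0,
    fun i => i.elim0, fun i => i.elim0⟩

lemma isMimMatching_le_card {V : Type} [Fintype V] {G : SimpleGraph V} {A : Set V} {t : ℕ}
    (h : IsMimMatching G A t) : t ≤ Fintype.card V := by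
  obtain ⟨a, -, ha, -⟩ := h
  calc t = Fintype.card (Fin t) := by simp
    _ ≤ Fintype.card V := Fintype.card_le_of_injective a ha

lemma le_mimval {V : Type} [Fintype V] {G : SimpleGraph V} {A : Set V} {t : ℕ}
    (h : IsMimMatching G A t) : t ≤ mimval G A := by
  apply le_csSup
  · exact ⟨Fintype.card V, fun n hn => isMimMatching_le_card hn⟩
  · exact h

lemma mimval_le_card {V : Type} [Fintype V] (G : SimpleGraph V) (A : Set V) :
    mimval G A ≤ Fintype.card V := by
  apply csSup_le
  · exact ⟨0, isMimMatching_zero G A⟩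
  · exact fun n hn => isMimMatching_le_card hn


lemma mem_cut_iff {V : Type} [Fintype V] (D : BranchDecomp V) (x y : D.β) (v : V) :
    v ∈ D.cut x y ↔ D.L v ∈ side D.T x y := Iff.rfl

lemma core (m : ℕ) (hm : 4 ≤ m) (D : BranchDecomp (splitV m)) (x y : D.β)
    (hadj : D.T.Adj x y)
    (hw : 2 ^ m - 1 ≤ 3 * (Finset.univ.filter
      (fun S : {S : Finset (Fin m) // S.Nonempty} => D.L (Sum.inr S) ∈ side D.T x y)).card)
    (hk : m ≤ 2 * (Finset.univ.filter
      (fun i : Fin m => D.L (Sum.inl i) ∈ side D.T y x)).card) :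
    IsMimMatching (splitG m) (D.cut x y) (tval m) := by
  letI := D.finβ
  set T := D.T with hT
  set L := D.L with hL
  set IA : Finset {S : Finset (Fin m) // S.Nonempty} :=
    Finset.univ.filter (fun S => L (Sum.inr S) ∈ side T x y) with hIA
  set CB : Finset (Fin m) :=
    Finset.univ.filter (fun i => L (Sum.inl i) ∈ side T y x) with hCB
  set CA : Finset (Fin m) :=
    Finset.univ.filter (fun i => L (Sum.inl i) ∈ side T x y) with hCA
  set k := CB.card with hkdef
  have hside : ∀ z, z ∈ side T x y ↔ z ∉ side T y x :=
    fun z => mem_side_iff T D.connected D.acyclic hadj z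
  have hCAcard : CA.card + CB.card = m := by
    have h1 := Finset.card_filter_add_card_filter_not
      (s := (Finset.univ : Finset (Fin m))) (p := fun i => L (Sum.inl i) ∈ side T x y)
    have h2 : Finset.univ.filter (fun i : Fin m => ¬ (L (Sum.inl i) ∈ side T x y)) = CB := by
      apply Finset.filter_congr
      intro i _
      constructor
      · intro h'
        rcases cover T D.connected x y (L (Sum.inl i)) with h'' | h''
        · exact absurd h'' h'
        · exact h''
      · intro h' h''
        exact ((hside _).mp h'') h'
    rw [h2] at h1
    simpa [Finset.card_univ] using h1
  set τ : {S : Finset (Fin m) // S.Nonempty} → Finset (Fin m) := fun S => S.1 ∩ CB with hτ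
  set 𝒜 := IA.image τ with h𝒜
  -- counting: IA.card ≤ 2^(m-k) * 𝒜.card
  have hfiber : IA.card ≤ 2 ^ (m - k) * 𝒜.card := by
    apply Finset.card_le_mul_card_image
    intro u hu
    calc (IA.filter (fun S => τ S = u)).card
        ≤ CA.powerset.card := by
          apply Finset.card_le_card_of_injOn (fun S => S.1 ∩ CA)
          · intro S _
            simp only [Finset.mem_powerset]
            exact Finset.mem_coe.mpr (Finset.mem_powerset.mpr Finset.inter_subset_right)
          · intro S hS S' hS' hg
            simp only [Finset.mem_coe, Finset.mem_filter] at hS hS'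
            apply Subtype.ext
            have hcover : ∀ i : Fin m, i ∈ CB ∪ CA := by
              intro i
              rw [Finset.mem_union, hCB, hCA]
              simp only [Finset.mem_filter, Finset.mem_univ, true_and]
              rcases cover T D.connected x y (L (Sum.inl i)) with h' | h'
              · exact Or.inr h'
              · exact Or.inl h'
            have hsplit : ∀ W : Finset (Fin m), W = W ∩ CB ∪ W ∩ CA := by
              intro W
              ext i
              simp only [Finset.mem_union, Finset.mem_inter]
              constructor
              · intro hi
                rcases Finset.mem_union.mp (hcover i) with h' | h'
                · exact Or.inl ⟨hi, h'⟩
                · exact Or.inr ⟨hi, h'⟩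
              · rintro (⟨hi, -⟩ | ⟨hi, -⟩) <;> exact hi
            rw [hsplit S.1, hsplit S'.1]
            have h1 : S.1 ∩ CB = S'.1 ∩ CB := by
              rw [show S.1 ∩ CB = τ S from rfl, show S'.1 ∩ CB = τ S' from rfl, hS.2, hS'.2]
            have h2 : S.1 ∩ CA = S'.1 ∩ CA := hg
            rw [h1, h2]
      _ = 2 ^ (m - k) := by
          rw [Finset.card_powerset]
          congr 1
          omega
  -- Sauer-Shelah: a shattered set of size tval m inside CB
  have hkm : k ≤ m := by omega
  have hnum := key_numeric hm hk hkm
  have h𝒜lt : (∑ i ∈ Finset.range (tval m), Nat.choose k i) < 𝒜.card := by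
    have h1 : 3 * 2 ^ (m - k) * (∑ i ∈ Finset.range (tval m), Nat.choose k i)
        < 3 * 2 ^ (m - k) * 𝒜.card := by
      calc 3 * 2 ^ (m - k) * (∑ i ∈ Finset.range (tval m), Nat.choose k i)
          < 2 ^ m - 1 := hnum
        _ ≤ 3 * IA.card := hw
        _ ≤ 3 * (2 ^ (m - k) * 𝒜.card) := by omega
        _ = 3 * 2 ^ (m - k) * 𝒜.card := by ring
    exact Nat.lt_of_mul_lt_mul_left h1
  have h𝒜CB : ∀ u ∈ 𝒜, u ⊆ CB := by
    intro u hu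
    obtain ⟨S, -, rfl⟩ := Finset.mem_image.mp hu
    exact Finset.inter_subset_right
  have hshat : ∃ s : Finset (Fin m), 𝒜.Shatters s ∧ s.card = tval m ∧ s ⊆ CB := by
    have hex : ∃ s ∈ 𝒜.shatterer, tval m ≤ s.card := by
      by_contra h'
      push_neg at h'
      have hsub : 𝒜.shatterer ⊆ (Finset.range (tval m)).biUnion
          (fun i => CB.powersetCard i) := by
        intro s hs
        have hcard := h' s hs
        have hsh := Finset.mem_shatterer.mp hs
        obtain ⟨u, hu, hsu⟩ := hsh.exists_superset
        rw [Finset.mem_biUnion]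
        exact ⟨s.card, Finset.mem_range.mpr hcard,
          Finset.mem_powersetCard.mpr ⟨hsu.trans (h𝒜CB u hu), rfl⟩⟩
      have hcb : ((Finset.range (tval m)).biUnion (fun i => CB.powersetCard i)).card
          ≤ ∑ i ∈ Finset.range (tval m), Nat.choose k i := by
        calc ((Finset.range (tval m)).biUnion (fun i => CB.powersetCard i)).card
            ≤ ∑ i ∈ Finset.range (tval m), (CB.powersetCard i).card :=
              Finset.card_biUnion_le
          _ = ∑ i ∈ Finset.range (tval m), Nat.choose k i := by
              apply Finset.sum_congr rfl
              intro i _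
              rw [Finset.card_powersetCard]
      have := Finset.card_le_card_shatterer 𝒜
      have := Finset.card_le_card hsub
      omega
    obtain ⟨s, hs, hcard⟩ := hex
    obtain ⟨s', hs'sub, hs'card⟩ := Finset.exists_subset_card_eq hcard
    refine ⟨s', Finset.Shatters.mono_right hs'sub (Finset.mem_shatterer.mp hs), hs'card, ?_⟩
    obtain ⟨u, hu, hsu⟩ := (Finset.mem_shatterer.mp hs).exists_superset
    exact (hs'sub.trans hsu).trans (h𝒜CB u hu)
  obtain ⟨s', hshatters, hs'card, hs'CB⟩ := hshat
  -- build the matching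
  set e := s'.orderIsoOfFin hs'card with he
  have hkey : ∀ i : Fin (tval m), ∃ S : {S : Finset (Fin m) // S.Nonempty},
      S ∈ IA ∧ s' ∩ (S.1 ∩ CB) = {(e i : Fin m)} := by
    intro i
    obtain ⟨u, hu, hinter⟩ := hshatters.exists_inter_eq_singleton (e i).2
    obtain ⟨S, hSIA, hτS⟩ := Finset.mem_image.mp hu
    exact ⟨S, hSIA, by rw [show S.1 ∩ CB = τ S from rfl, hτS]; exact hinter⟩
  choose F hF1 hF2 using hkey
  refine ⟨fun i => Sum.inr (F i), fun i => Sum.inl (e i), ?_, ?_, ?_, ?_, ?_⟩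
  · -- injectivity of a
    intro i j hij
    have hFij : F i = F j := by
      simpa using hij
    have : ({(e i : Fin m)} : Finset (Fin m)) = {(e j : Fin m)} := by
      rw [← hF2 i, ← hF2 j, hFij]
    have : (e i : Fin m) = (e j : Fin m) := by
      simpa using this
    exact e.injective (Subtype.ext this)
  · -- injectivity of b
    intro i j hij
    simp only [Sum.inl.injEq] at hij
    exact e.injective (Subtype.ext hij)
  · -- a i ∈ cut
    intro i
    have := hF1 i
    rw [hIA, Finset.mem_filter] at this
    exact this.2
  · -- b i ∉ cut
    intro i
    rw [mem_cut_iff]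
    have hmem : (e i : Fin m) ∈ CB := hs'CB (e i).2
    rw [hCB, Finset.mem_filter] at hmem
    intro hcon
    exact ((hside _).mp hcon) hmem.2
  · -- adjacency iff
    intro i j
    rw [split_adj]
    have hej : (e j : Fin m) ∈ s' := (e j).2
    have hejCB : (e j : Fin m) ∈ CB := hs'CB hej
    constructor
    · intro hmem
      have : (e j : Fin m) ∈ s' ∩ ((F i).1 ∩ CB) :=
        Finset.mem_inter.mpr ⟨hej, Finset.mem_inter.mpr ⟨hmem, hejCB⟩⟩
      rw [hF2 i] at this
      have : (e j : Fin m) = (e i : Fin m) := by simpa using this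
      exact (e.injective (Subtype.ext this)).symm
    · rintro rfl
      have : (e i : Fin m) ∈ s' ∩ ((F i).1 ∩ CB) := by
        rw [hF2 i]
        simp
      have := Finset.mem_inter.mp this
      exact (Finset.mem_inter.mp this.2).1


noncomputable def catDecomp (V : Type) [Fintype V] (hV : 6 ≤ Fintype.card V) :
    BranchDecomp V where
  β := Fin (2 * Fintype.card V - 2)
  finβ := inferInstance
  T := catT (Fintype.card V)
  connected := parent_connected (catP_lt hV) (by omega)
  acyclic := parent_acyclic (catP_lt hV) (catP_zero (n := Fintype.card V))
  subcubic := fun x => by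
    rw [cat_deg hV x]
    split_ifs <;> simp
  L := fun v => ⟨Fintype.card V - 2 + ((Fintype.equivFin V) v).val, by
    have := ((Fintype.equivFin V) v).isLt; omega⟩
  inj := by
    intro v w h
    rw [Fin.mk.injEq] at h
    have : ((Fintype.equivFin V) v) = ((Fintype.equivFin V) w) :=
      Fin.val_injective (by omega)
    exact (Fintype.equivFin V).injective this
  leaves := by
    intro x
    rw [cat_deg hV x]
    split_ifs with hx
    · constructor
      · intro _
        refine ⟨(Fintype.equivFin V).symm ⟨x.val - (Fintype.card V - 2), by
          have := x.isLt; omega⟩, ?_⟩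
        apply Fin.val_injective
        simp only [Equiv.apply_symm_apply]
        have := x.isLt
        omega
      · intro _
        rfl
    · constructor
      · intro h3
        omega
      · rintro ⟨v, hv⟩
        exfalso
        apply hx
        rw [← hv]
        exact Nat.le_add_right _ _

lemma side_clique_partition (m : ℕ) (D : BranchDecomp (splitV m)) (x y : D.β)
    (hadj : D.T.Adj x y) :
    (Finset.univ.filter (fun i : Fin m => D.L (Sum.inl i) ∈ side D.T x y)).card +
    (Finset.univ.filter (fun i : Fin m => D.L (Sum.inl i) ∈ side D.T y x)).card = m := by
  letI := D.finβ
  have h1 := Finset.card_filter_add_card_filter_not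
    (s := (Finset.univ : Finset (Fin m))) (p := fun i => D.L (Sum.inl i) ∈ side D.T x y)
  have h2 : Finset.univ.filter (fun i : Fin m => ¬ (D.L (Sum.inl i) ∈ side D.T x y)) =
      Finset.univ.filter (fun i : Fin m => D.L (Sum.inl i) ∈ side D.T y x) := by
    apply Finset.filter_congr
    intro i _
    constructor
    · intro h'
      rcases cover D.T D.connected x y (D.L (Sum.inl i)) with h'' | h''
      · exact absurd h'' h'
      · exact h''
    · intro h' h''
      exact side_disjoint D.T D.acyclic hadj _ h'' h'
  rw [h2] at h1
  simpa [Finset.card_univ] using h1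

lemma tval_le_mimw (m : ℕ) (hm : 4 ≤ m) : tval m ≤ mimw (splitG m) := by
  have h2m : 16 ≤ 2 ^ m := by
    calc (16:ℕ) = 2 ^ 4 := by norm_num
      _ ≤ 2 ^ m := Nat.pow_le_pow_right (by norm_num) hm
  have hcardV : Fintype.card (splitV m) = m + (2 ^ m - 1) := by
    rw [Fintype.card_sum, Fintype.card_fin, card_I]
  have hV6 : 6 ≤ Fintype.card (splitV m) := by omega
  rw [mimw, fWidth]
  apply le_csInf
  · exact ⟨Fintype.card (splitV m), catDecomp _ hV6, fun x y _ => mimval_le_card _ _⟩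
  · rintro w ⟨D, hD⟩
    letI := D.finβ
    set μ : D.β → ℕ := fun z => (Finset.univ.filter
      (fun S : {S : Finset (Fin m) // S.Nonempty} => D.L (Sum.inr S) = z)).card with hμ
    have hμ1 : ∀ z, μ z ≤ 1 := by
      intro z
      apply Finset.card_le_one.mpr
      intro a ha b hb
      simp only [Finset.mem_filter] at ha hb
      have := D.inj (ha.2.trans hb.2.symm)
      exact Sum.inr_injective this
    have hμ3 : ∀ z, (D.T.neighborSet z).ncard = 3 → μ z = 0 := by
      intro z h3
      by_contra h0
      have hpos : 0 < μ z := Nat.pos_of_ne_zero h0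
      obtain ⟨S, hS⟩ := Finset.card_pos.mp hpos
      simp only [Finset.mem_filter] at hS
      have := (D.leaves z).mpr ⟨Sum.inr S, hS.2⟩
      omega
    have hWsum : ∑ z, μ z = 2 ^ m - 1 := by
      have h := Finset.card_eq_sum_card_fiberwise
        (s := (Finset.univ : Finset {S : Finset (Fin m) // S.Nonempty}))
        (t := (Finset.univ : Finset D.β))
        (f := fun S => D.L (Sum.inr S)) (fun x _ => Finset.mem_univ _)
      rw [Finset.card_univ, card_I] at h
      rw [← h]
    have hW2 : 2 ≤ ∑ z, μ z := by rw [hWsum]; omega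
    have hnt : ∃ a b : D.β, a ≠ b := by
      refine ⟨D.L (Sum.inl ⟨0, by omega⟩), D.L (Sum.inl ⟨1, by omega⟩), fun h => ?_⟩
      have := D.inj h
      simp only [Sum.inl.injEq, Fin.mk.injEq] at this
      omega
    obtain ⟨x, y, hadj, hbx, hby⟩ := exists_balanced D.T μ D.connected D.acyclic
      D.subcubic hμ1 hμ3 hW2 hnt
    have hwEq : ∀ (x y : D.β), wS μ (side D.T x y) = (Finset.univ.filter
        (fun S : {S : Finset (Fin m) // S.Nonempty} =>
          D.L (Sum.inr S) ∈ side D.T x y)).card := by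
      intro x y
      have h := Finset.card_eq_sum_card_fiberwise
        (s := Finset.univ.filter (fun S : {S : Finset (Fin m) // S.Nonempty} =>
          D.L (Sum.inr S) ∈ side D.T x y))
        (t := Finset.univ.filter (· ∈ side D.T x y))
        (f := fun S => D.L (Sum.inr S))
        (by
          intro S hS
          simp only [Finset.coe_filter, Finset.mem_coe, Finset.mem_filter, Set.mem_setOf_eq] at hS ⊢
          exact ⟨Finset.mem_univ _, hS.2⟩)
      rw [h, wS]
      apply Finset.sum_congr rfl
      intro z hz
      simp only [Finset.mem_filter, Finset.mem_univ, true_and] at hz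
      have heq : Finset.filter (fun S : {S : Finset (Fin m) // S.Nonempty} =>
            D.L (Sum.inr S) = z)
          (Finset.univ.filter (fun S : {S : Finset (Fin m) // S.Nonempty} =>
            D.L (Sum.inr S) ∈ side D.T x y)) =
          Finset.filter (fun S : {S : Finset (Fin m) // S.Nonempty} =>
            D.L (Sum.inr S) = z) Finset.univ := by
        ext S
        simp only [Finset.mem_filter, Finset.mem_univ, true_and]
        constructor
        · rintro ⟨-, h'⟩
          exact h'
        · intro h'
          exact ⟨by rw [h']; exact hz, h'⟩
      rw [heq]
    rw [hwEq x y] at hbx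
    rw [hwEq y x] at hby
    rw [hWsum] at hbx hby
    have hpart := side_clique_partition m D x y hadj
    rcases le_or_gt m (2 * (Finset.univ.filter
        (fun i : Fin m => D.L (Sum.inl i) ∈ side D.T y x)).card) with hk | hk
    · have hmatch := core m hm D x y hadj hbx hk
      have h1 := le_mimval hmatch
      have h2 := hD x y hadj
      omega
    · have hk' : m ≤ 2 * (Finset.univ.filter
          (fun i : Fin m => D.L (Sum.inl i) ∈ side D.T x y)).card := by omega
      have hmatch := core m hm D y x hadj.symm hby hk'
      have h1 := le_mimval hmatch
      have h2 := hD y x hadj.symm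
      omega


end MimAux

/-- the split graph with a clique of size `m` and an independent set of all
`2^m - 1` distinct nonempty neighborhoods has mim-width at least `m / (4 log₂ m)`, and
hence, with `n = m + 2^m - 1` vertices, mim-width at least `log₂ n / (5 log₂ log₂ n)`;
in particular, split (hence chordal) graphs have unbounded mim-width. -/
theorem stmt6 (m : ℕ) (hm : 4 ≤ m) :
    (m : ℝ) / (4 * Real.logb 2 m) ≤ (mimw (splitG m) : ℝ) ∧
    Real.logb 2 ((m : ℝ) + 2 ^ m - 1) /
        (5 * Real.logb 2 (Real.logb 2 ((m : ℝ) + 2 ^ m - 1))) ≤ (mimw (splitG m) : ℝ) := by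
  have hmain : (m : ℝ) / (4 * Real.logb 2 m) ≤ (mimw (splitG m) : ℝ) := by
    have h1 := MimAux.tval_le_mimw m hm
    have h2 : ((MimAux.tval m : ℕ) : ℝ) ≤ (mimw (splitG m) : ℝ) := by exact_mod_cast h1
    exact le_trans (Nat.le_ceil _) h2
  refine ⟨hmain, ?_⟩
  have hL2m : 2 ≤ Real.logb 2 m := MimAux.logb_ge_two hm
  have hm4 : (4 : ℝ) ≤ (m : ℝ) := by exact_mod_cast hm
  have hmpos : (0 : ℝ) < m := by linarith
  set n : ℝ := (m : ℝ) + 2 ^ m - 1 with hn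
  have hmlt : (m : ℝ) ≤ 2 ^ m := by
    have h : m < 2 ^ m := Nat.lt_two_pow_self
    have h' : (m : ℝ) < ((2 ^ m : ℕ) : ℝ) := by exact_mod_cast h
    push_cast at h'
    linarith
  have h2mpos : (0 : ℝ) < 2 ^ m := by positivity
  have hn1 : (2 : ℝ) ^ m ≤ n := by rw [hn]; linarith
  have hn2 : n ≤ (2 : ℝ) ^ (m + 1) := by
    rw [hn, pow_succ]
    linarith
  have hnpos : (0 : ℝ) < n := lt_of_lt_of_le h2mpos hn1
  have hLn1 : (m : ℝ) ≤ Real.logb 2 n := by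
    rw [Real.le_logb_iff_rpow_le one_lt_two hnpos]
    calc (2 : ℝ) ^ ((m : ℕ) : ℝ) = (2 : ℝ) ^ (m : ℕ) := Real.rpow_natCast 2 m
      _ ≤ n := hn1
  have hLn2 : Real.logb 2 n ≤ (m : ℝ) + 1 := by
    rw [Real.logb_le_iff_le_rpow one_lt_two hnpos]
    have hcast : ((m : ℝ) + 1) = (((m + 1 : ℕ)) : ℝ) := by push_cast; ring
    rw [hcast, Real.rpow_natCast]
    exact hn2
  have hLL : Real.logb 2 (m : ℝ) ≤ Real.logb 2 (Real.logb 2 n) :=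
    Real.logb_le_logb_of_le one_lt_two hmpos hLn1
  have hLLpos : 0 < Real.logb 2 (Real.logb 2 n) := by linarith
  have hfrac : Real.logb 2 n / (5 * Real.logb 2 (Real.logb 2 n))
      ≤ ((m : ℝ) + 1) / (5 * Real.logb 2 m) := by
    apply div_le_div₀ (by linarith) hLn2 (by linarith)
    linarith
  have hfrac2 : ((m : ℝ) + 1) / (5 * Real.logb 2 m) ≤ (m : ℝ) / (4 * Real.logb 2 m) := by
    rw [div_le_div_iff₀ (by linarith) (by linarith)]
    nlinarith
  calc Real.logb 2 n / (5 * Real.logb 2 (Real.logb 2 n))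
      ≤ ((m : ℝ) + 1) / (5 * Real.logb 2 m) := hfrac
    _ ≤ (m : ℝ) / (4 * Real.logb 2 m) := hfrac2
    _ ≤ (mimw (splitG m) : ℝ) := hmain
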